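/- For every integer t ≥ 2, R_t(6) ≥ 829·27^{t−2} + 1: for every t ≥ 2 there exists a t-edge-colored tournament on 829·27^{t−2} vertices containing no monochromatic transitive subtournament of order 6. -/

import Mathlib

set_option maxRecDepth 100000

namespace Stmt11Aux

/-! ### Chain form of the Ramsey goodness property -/

def GoodC (N k : ℕ) : Prop :=
  ∃ (r : Fin N → Fin N → Prop) (c : Fin N → Fin N → ℕ),
    (∀ v, ¬ r v v) ∧
    (∀ u v : Fin N, u ≠ v → (r u v ↔ ¬ r v u)) ∧
    (∀ u v, r u v → 1 ≤ c u v ∧ c u v ≤ k) ∧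
    ¬ ∃ (f : Fin 6 → Fin N) (col : ℕ),
        ∀ i j : Fin 6, i < j → r (f i) (f j) ∧ c (f i) (f j) = col

/-! ### Extracting a monotone chain from a transitive 6-subset -/

theorem chain_of_six {V : Type*} (r : V → V → Prop)
    (hirr : ∀ v, ¬ r v v) (htot : ∀ u v : V, u ≠ v → (r u v ↔ ¬ r v u))
    (s : Finset V) (h6 : s.card = 6)
    (htr : ∀ a ∈ s, ∀ b ∈ s, ∀ d ∈ s, r a b → r b d → r a d) :
    ∃ f : Fin 6 → V, (∀ i, f i ∈ s) ∧ ∀ i j : Fin 6, i < j → r (f i) (f j) := by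
  classical
  let S := {x : V // x ∈ s}
  let r' : S → S → Prop := fun a b => r a.1 b.1
  haveI : IsIrrefl S r' := ⟨fun a => hirr a.1⟩
  haveI : IsTrans S r' := ⟨fun a b c hab hbc => htr a.1 a.2 b.1 b.2 c.1 c.2 hab hbc⟩
  haveI : IsTrichotomous S r' := ⟨fun a b => by
    intro hr hr'
    by_contra h
    have hne : a.1 ≠ b.1 := fun hh => h (Subtype.ext hh)
    exact hr' ((htot b.1 a.1 hne.symm).mpr hr)⟩
  haveI : IsStrictTotalOrder S r' := {}
  letI : DecidableRel r' := fun a b => Classical.dec _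
  letI : LinearOrder S := linearOrderOfSTO r'
  have hcard : Fintype.card S = 6 := by
    simpa [S, Fintype.card_coe] using h6
  let e := monoEquivOfFin S hcard
  refine ⟨fun i => (e i).1, fun i => (e i).2, fun i j hij => ?_⟩
  exact e.strictMono hij

/-! ### The 27-vertex tournament (quadratic residues in GF(27)) with no TT6 -/

def BIG27 : ℕ := 393096215780161412800710467705511314993082021753828093097750328711961724607589983009302223378609262016444833691624177947839805986394102451688646593303492274952206027058242054755489869847845889801470291788447222158441018

def adjN (i j : ℕ) : Bool := BIG27.testBit (27 * i + j)

def chk27 : Bool :=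
  (List.range 27).any fun a => (List.range 27).any fun b => adjN a b &&
    (((List.range 27).filter fun x => adjN a x && adjN b x).any fun c =>
      ((((List.range 27).filter fun x => adjN a x && adjN b x).filter fun x => adjN c x).any fun d =>
        (((((List.range 27).filter fun x => adjN a x && adjN b x).filter fun x => adjN c x).filter fun x => adjN d x).any fun e =>
          ((((((List.range 27).filter fun x => adjN a x && adjN b x).filter fun x => adjN c x).filter fun x => adjN d x).filter fun x => adjN e x).any fun _ => true))))

set_option maxHeartbeats 10000000 in
theorem chk27_false : chk27 = false := by decide +kernel

def r27 (u v : Fin 27) : Prop := adjN u.val v.val = true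

theorem r27_irrefl : ∀ v : Fin 27, ¬ r27 v v := by unfold r27; decide

theorem r27_total : ∀ u v : Fin 27, u ≠ v → (r27 u v ↔ ¬ r27 v u) := by unfold r27; decide

theorem r27_no6 : ¬ ∃ f : Fin 6 → Fin 27, ∀ i j : Fin 6, i < j → r27 (f i) (f j) := by
  rintro ⟨f, hf⟩
  have hmem : ∀ i : Fin 6, (f i).val ∈ List.range 27 := fun i =>
    List.mem_range.mpr (f i).isLt
  have hadj : ∀ i j : Fin 6, i < j → adjN (f i).val (f j).val = true := fun i j hij => hf i j hij
  have : chk27 = true := by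
    unfold chk27
    rw [List.any_eq_true]
    refine ⟨(f 0).val, hmem 0, ?_⟩
    rw [List.any_eq_true]
    refine ⟨(f 1).val, hmem 1, ?_⟩
    rw [Bool.and_eq_true]
    refine ⟨hadj 0 1 (by decide), ?_⟩
    rw [List.any_eq_true]
    refine ⟨(f 2).val, List.mem_filter.mpr ⟨hmem 2, by
      rw [Bool.and_eq_true]; exact ⟨hadj 0 2 (by decide), hadj 1 2 (by decide)⟩⟩, ?_⟩
    rw [List.any_eq_true]
    refine ⟨(f 3).val, List.mem_filter.mpr ⟨List.mem_filter.mpr ⟨hmem 3, by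
      rw [Bool.and_eq_true]; exact ⟨hadj 0 3 (by decide), hadj 1 3 (by decide)⟩⟩,
      hadj 2 3 (by decide)⟩, ?_⟩
    rw [List.any_eq_true]
    refine ⟨(f 4).val, List.mem_filter.mpr ⟨List.mem_filter.mpr ⟨List.mem_filter.mpr ⟨hmem 4, by
      rw [Bool.and_eq_true]; exact ⟨hadj 0 4 (by decide), hadj 1 4 (by decide)⟩⟩,
      hadj 2 4 (by decide)⟩, hadj 3 4 (by decide)⟩, ?_⟩
    rw [List.any_eq_true]
    exact ⟨(f 5).val, List.mem_filter.mpr ⟨List.mem_filter.mpr ⟨List.mem_filter.mpr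
      ⟨List.mem_filter.mpr ⟨hmem 5, by
        rw [Bool.and_eq_true]; exact ⟨hadj 0 5 (by decide), hadj 1 5 (by decide)⟩⟩,
      hadj 2 5 (by decide)⟩, hadj 3 5 (by decide)⟩, hadj 4 5 (by decide)⟩, rfl⟩
  rw [chk27_false] at this
  exact Bool.false_ne_true this


/-! ### The 2-colored 829-vertex tournament (quartic residues mod 829) -/

def BIG829 : ℕ := 9248181536310222550343333598808216504292723568321599593105895159589168808140276779938797413807991964186145456296090244760040124324330190933469140351846565937149208578105139897673325663387244215817790937098804310939449253246835165426589023437947093240017775437019436011746109542986225038444095162433074725350658253792310728643299261992371378244208687498559740091614471577703190799587391911102282682311329507162965593635060898409539238772253889995780336430234197375624565808671091444522935973131276818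

def clsZ (d : ZMod 829) : ℕ := (BIG829 >>> (2 * d.val)) % 4

def W : ZMod 829 := 583

def chi (x : ZMod 829) : ZMod 829 :=
  let x2 := x * x
  let x4 := x2 * x2
  let x8 := x4 * x4
  let x16 := x8 * x8
  let x32 := x16 * x16
  let x64 := x32 * x32
  let x128 := x64 * x64
  x128 * x64 * x8 * x4 * x2 * x

theorem hchi : ∀ x : ZMod 829, chi x = x ^ 207 := by intro x; unfold chi; ring

theorem chi_mul (a b : ZMod 829) : chi (a * b) = chi a * chi b := by
  rw [hchi, hchi, hchi, mul_pow]

set_option maxHeartbeats 10000000 in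
theorem bridge : ∀ d : ZMod 829, d ≠ 0 →
    ((chi d = 1 ↔ clsZ d = 0) ∧ (chi d = W ↔ clsZ d = 1) ∧
     (chi d = 828 ↔ clsZ d = 2) ∧ (chi d = 246 ↔ clsZ d = 3)) ∧ clsZ d < 4 := by decide +kernel

set_option maxHeartbeats 10000000 in
theorem negcls : ∀ d : ZMod 829, d ≠ 0 → clsZ (-d) = (clsZ d + 2) % 4 := by decide +kernel

def LZ : List (ZMod 829) := (List.range 829).map (fun n => (n : ZMod 829))

theorem mem_LZ (x : ZMod 829) : x ∈ LZ :=
  (List.mem_map (f := fun n : ℕ => (n : ZMod 829)) (l := List.range 829)).mpr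
    ⟨x.val, List.mem_range.mpr (ZMod.val_lt x), ZMod.natCast_rightInverse x⟩

def chk (rep : ZMod 829) (e : ℕ) : Bool :=
  ((LZ.filter fun x => clsZ x == e && clsZ (x - rep) == e).any fun a =>
    (((LZ.filter fun x => clsZ x == e && clsZ (x - rep) == e).filter fun x => clsZ (x - a) == e).any fun b =>
      ((((LZ.filter fun x => clsZ x == e && clsZ (x - rep) == e).filter fun x => clsZ (x - a) == e).filter fun x => clsZ (x - b) == e).any fun c =>
        ((((LZ.filter fun x => clsZ x == e && clsZ (x - rep) == e).filter fun x => clsZ (x - a) == e).filter fun x => clsZ (x - b) == e).any fun d =>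
          clsZ (d - c) == e))))

set_option maxHeartbeats 10000000 in
theorem chk10 : chk 1 0 = false := by decide +kernel

set_option maxHeartbeats 10000000 in
theorem chk21 : chk 2 1 = false := by decide +kernel

def z (u : Fin 829) : ZMod 829 := (u.val : ZMod 829)

theorem z_inj : Function.Injective z := by
  intro u v h
  have hu : (z u).val = u.val := ZMod.val_cast_of_lt u.isLt
  have hv : (z v).val = v.val := ZMod.val_cast_of_lt v.isLt
  exact Fin.ext (by rw [← hu, ← hv, h])

def r0 (u v : Fin 829) : Prop := chi (z v - z u) = 1 ∨ chi (z v - z u) = W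

def c0 (u v : Fin 829) : ℕ := if chi (z v - z u) = 1 then 1 else 2

theorem chi_zero : chi 0 = 0 := by decide

theorem r0_irrefl : ∀ v : Fin 829, ¬ r0 v v := by
  intro v h
  rw [r0, sub_self, chi_zero] at h
  rcases h with h | h
  · exact absurd h (by decide)
  · exact absurd h (by decide)

theorem cls_r0 (u v : Fin 829) (h : u ≠ v) :
    r0 u v ↔ (clsZ (z v - z u) = 0 ∨ clsZ (z v - z u) = 1) := by
  have hd : z v - z u ≠ 0 := sub_ne_zero.mpr (fun hh => h (z_inj hh).symm)
  obtain ⟨⟨h1, h2, _, _⟩, _⟩ := bridge _ hd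
  exact or_congr h1 h2

theorem r0_total : ∀ u v : Fin 829, u ≠ v → (r0 u v ↔ ¬ r0 v u) := by
  intro u v h
  have hd : z v - z u ≠ 0 := sub_ne_zero.mpr (fun hh => h (z_inj hh).symm)
  have hd' : z u - z v ≠ 0 := sub_ne_zero.mpr (fun hh => h.symm (z_inj hh).symm)
  have hneg : z u - z v = -(z v - z u) := by ring
  have hcls : clsZ (z u - z v) = (clsZ (z v - z u) + 2) % 4 := by
    rw [hneg]; exact negcls _ hd
  have hlt : clsZ (z v - z u) < 4 := (bridge _ hd).2
  rw [cls_r0 u v h, cls_r0 v u h.symm, hcls]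
  omega

theorem r0_colors : ∀ u v : Fin 829, r0 u v → 1 ≤ c0 u v ∧ c0 u v ≤ 2 := by
  intro u v _
  unfold c0
  split <;> omega

/-! ### No monochromatic TT6 in the 829-vertex 2-coloring -/

set_option maxHeartbeats 1000000 in
theorem no_chain_eps (v : Fin 6 → ZMod 829) (ε rep : ZMod 829) (E : ℕ)
    (hrep : chi rep = ε) (hεne : ε ≠ 0)
    (hbr : ∀ d : ZMod 829, d ≠ 0 → (chi d = ε ↔ clsZ d = E))
    (hε828 : ε ^ 828 = 1)
    (hchk : chk rep E = false)
    (key : ∀ i j : Fin 6, i < j → chi (v j - v i) = ε) : False := by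
  have hd01 : v 1 - v 0 ≠ 0 := by
    intro h
    have k01 := key 0 1 (by decide)
    rw [h, chi_zero] at k01
    exact hεne k01.symm
  have h828 : (v 1 - v 0) ^ 828 = 1 := by
    haveI : Fact (Nat.Prime 829) := ⟨by norm_num⟩
    have h := ZMod.pow_card_sub_one_eq_one (p := 829) hd01
    norm_num at h
    exact h
  have hchia : chi (rep * (v 1 - v 0) ^ 827) = 1 := by
    rw [chi_mul, hrep]
    have h2 : chi ((v 1 - v 0) ^ 827) = ε ^ 827 := by
      rw [hchi, ← pow_mul, mul_comm 827 207, pow_mul, ← hchi, key 0 1 (by decide)]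
    rw [h2, ← pow_succ']
    have h8 : (827 : ℕ) + 1 = 828 := rfl
    rw [h8]
    exact hε828
  obtain ⟨a, hadef⟩ : ∃ a : ZMod 829, a = rep * (v 1 - v 0) ^ 827 := ⟨_, rfl⟩
  rw [← hadef] at hchia
  obtain ⟨x, hxdef⟩ : ∃ x : Fin 6 → ZMod 829, x = fun i => a * (v i - v 0) := ⟨_, rfl⟩
  have hx0 : x 0 = 0 := by rw [hxdef]; show a * (v 0 - v 0) = 0; rw [sub_self, mul_zero]
  have hx1 : x 1 = rep := by
    rw [hxdef]
    show a * (v 1 - v 0) = rep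
    rw [hadef, mul_assoc, ← pow_succ]
    have h8 : (827 : ℕ) + 1 = 828 := rfl
    rw [h8, h828, mul_one]
  have hxkey : ∀ i j : Fin 6, i < j → chi (x j - x i) = ε := by
    intro i j hij
    have hxx : x j - x i = a * (v j - v i) := by
      rw [hxdef]
      show a * (v j - v 0) - a * (v i - v 0) = a * (v j - v i)
      rw [← mul_sub, sub_sub_sub_cancel_right]
    rw [hxx, chi_mul, hchia, one_mul]
    exact key i j hij
  have hxcls : ∀ i j : Fin 6, i < j → clsZ (x j - x i) = E := by
    intro i j hij
    have hne : x j - x i ≠ 0 := by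
      intro h
      have hk := hxkey i j hij
      rw [h, chi_zero] at hk
      exact hεne hk.symm
    exact (hbr _ hne).mp (hxkey i j hij)
  have hC0 : ∀ j : Fin 6, 0 < j → clsZ (x j) = E := by
    intro j hj
    have := hxcls 0 j hj
    rwa [hx0, sub_zero] at this
  have hC1 : ∀ j : Fin 6, 1 < j → clsZ (x j - rep) = E := by
    intro j hj
    have := hxcls 1 j hj
    rwa [hx1] at this
  have hm1 : ∀ j : Fin 6, 1 < j →
      x j ∈ LZ.filter fun y => clsZ y == E && clsZ (y - rep) == E := by
    intro j hj
    refine List.mem_filter.mpr ⟨mem_LZ _, ?_⟩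
    rw [Bool.and_eq_true, beq_iff_eq, beq_iff_eq]
    exact ⟨hC0 j (lt_trans (by decide) hj), hC1 j hj⟩
  have htrue : chk rep E = true := by
    unfold chk
    rw [List.any_eq_true]
    refine ⟨x 2, hm1 2 (by decide), ?_⟩
    rw [List.any_eq_true]
    refine ⟨x 3, List.mem_filter.mpr ⟨hm1 3 (by decide), by
      rw [beq_iff_eq]; exact hxcls 2 3 (by decide)⟩, ?_⟩
    rw [List.any_eq_true]
    refine ⟨x 4, List.mem_filter.mpr ⟨List.mem_filter.mpr ⟨hm1 4 (by decide), by
      rw [beq_iff_eq]; exact hxcls 2 4 (by decide)⟩, by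
      rw [beq_iff_eq]; exact hxcls 3 4 (by decide)⟩, ?_⟩
    rw [List.any_eq_true]
    refine ⟨x 5, List.mem_filter.mpr ⟨List.mem_filter.mpr ⟨hm1 5 (by decide), by
      rw [beq_iff_eq]; exact hxcls 2 5 (by decide)⟩, by
      rw [beq_iff_eq]; exact hxcls 3 5 (by decide)⟩, by
      rw [beq_iff_eq]; exact hxcls 4 5 (by decide)⟩
  rw [hchk] at htrue
  exact Bool.false_ne_true htrue

theorem r0_no6 : ¬ ∃ (f : Fin 6 → Fin 829) (col : ℕ),
    ∀ i j : Fin 6, i < j → r0 (f i) (f j) ∧ c0 (f i) (f j) = col := by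
  rintro ⟨f, col, hf⟩
  have h01 := hf 0 1 (by decide)
  by_cases h1 : chi (z (f 1) - z (f 0)) = 1
  · -- color 1, ε = 1
    have hcol : col = 1 := by
      have hc01 := h01.2
      unfold c0 at hc01
      rw [if_pos h1] at hc01
      omega
    have key : ∀ i j : Fin 6, i < j → chi (z (f j) - z (f i)) = 1 := by
      intro i j hij
      obtain ⟨hr, hc⟩ := hf i j hij
      unfold c0 at hc
      by_cases h2 : chi (z (f j) - z (f i)) = 1
      · exact h2
      · rw [if_neg h2] at hc; omega
    exact no_chain_eps (fun i => z (f i)) 1 1 0 (by decide) (by decide)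
      (fun d hd => (bridge d hd).1.1) (one_pow 828) chk10 key
  · -- color 2, ε = W
    have hW : chi (z (f 1) - z (f 0)) = W := h01.1.resolve_left h1
    have hcol : col = 2 := by
      have hc01 := h01.2
      unfold c0 at hc01
      rw [if_neg h1] at hc01
      omega
    have key : ∀ i j : Fin 6, i < j → chi (z (f j) - z (f i)) = W := by
      intro i j hij
      obtain ⟨hr, hc⟩ := hf i j hij
      unfold c0 at hc
      by_cases h2 : chi (z (f j) - z (f i)) = 1
      · rw [if_pos h2] at hc; omega
      · exact hr.resolve_left h2
    exact no_chain_eps (fun i => z (f i)) W 2 1 (by decide) (by decide)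
      (fun d hd => (bridge d hd).1.2.1) (by decide) chk21 key

theorem base : GoodC 829 2 := ⟨r0, c0, r0_irrefl, r0_total, r0_colors, r0_no6⟩

/-! ### Composition -/

theorem comp {m k n : ℕ} (hn : 0 < n) (hm : GoodC m k)
    (r1 : Fin n → Fin n → Prop)
    (h1irr : ∀ v, ¬ r1 v v) (h1tot : ∀ u v, u ≠ v → (r1 u v ↔ ¬ r1 v u))
    (h1no : ¬ ∃ f : Fin 6 → Fin n, ∀ i j : Fin 6, i < j → r1 (f i) (f j)) :
    GoodC (m * n) (k + 1) := by
  obtain ⟨rb, cb, hbirr, hbtot, hbcol, hbno⟩ := hm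
  have hqlt : ∀ v : Fin (m * n), v.val / n < m := fun v =>
    (Nat.div_lt_iff_lt_mul hn).mpr v.isLt
  let q : Fin (m * n) → Fin m := fun v => ⟨v.val / n, hqlt v⟩
  let ρ : Fin (m * n) → Fin n := fun v => ⟨v.val % n, Nat.mod_lt _ hn⟩
  have hqρ : ∀ u v : Fin (m * n), q u = q v → ρ u = ρ v → u = v := by
    intro u v h1 h2
    have hA : u.val / n = v.val / n := congrArg Fin.val h1
    have hB : u.val % n = v.val % n := congrArg Fin.val h2
    have e1 := Nat.div_add_mod u.val n
    have e2 := Nat.div_add_mod v.val n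
    apply Fin.ext
    rw [hA, hB] at e1
    omega
  refine ⟨fun u v => if q u = q v then r1 (ρ u) (ρ v) else rb (q u) (q v),
    fun u v => if q u = q v then k + 1 else cb (q u) (q v), ?_, ?_, ?_, ?_⟩
  · intro v h
    have h' : (if q v = q v then r1 (ρ v) (ρ v) else rb (q v) (q v)) := h
    rw [if_pos rfl] at h'
    exact h1irr _ h'
  · intro u v huv
    show (if q u = q v then r1 (ρ u) (ρ v) else rb (q u) (q v)) ↔
      ¬ (if q v = q u then r1 (ρ v) (ρ u) else rb (q v) (q u))
    by_cases h : q u = q v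
    · rw [if_pos h, if_pos h.symm]
      exact h1tot _ _ fun he => huv (hqρ u v h he)
    · rw [if_neg h, if_neg (Ne.symm h)]
      exact hbtot _ _ h
  · intro u v hr
    have hr' : (if q u = q v then r1 (ρ u) (ρ v) else rb (q u) (q v)) := hr
    show 1 ≤ (if q u = q v then k + 1 else cb (q u) (q v)) ∧
      (if q u = q v then k + 1 else cb (q u) (q v)) ≤ k + 1
    by_cases h : q u = q v
    · rw [if_pos h]; omega
    · rw [if_neg h] at hr' ⊢
      have := hbcol _ _ hr'
      omega
  · rintro ⟨f, col, hf⟩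
    by_cases hq01 : q (f 0) = q (f 1)
    · have h2 : (if q (f 0) = q (f 1) then k + 1 else cb (q (f 0)) (q (f 1))) = col :=
        (hf 0 1 (by decide)).2
      rw [if_pos hq01] at h2
      have hall : ∀ i j : Fin 6, i < j → q (f i) = q (f j) := by
        intro i j hij
        by_contra hne
        have h3 : (if q (f i) = q (f j) then r1 (ρ (f i)) (ρ (f j)) else rb (q (f i)) (q (f j))) :=
          (hf i j hij).1
        have h4 : (if q (f i) = q (f j) then k + 1 else cb (q (f i)) (q (f j))) = col :=
          (hf i j hij).2
        rw [if_neg hne] at h3 h4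
        have := hbcol _ _ h3
        omega
      refine h1no ⟨fun i => ρ (f i), fun i j hij => ?_⟩
      have h3 : (if q (f i) = q (f j) then r1 (ρ (f i)) (ρ (f j)) else rb (q (f i)) (q (f j))) :=
        (hf i j hij).1
      rwa [if_pos (hall i j hij)] at h3
    · have h2 : (if q (f 0) = q (f 1) then k + 1 else cb (q (f 0)) (q (f 1))) = col :=
        (hf 0 1 (by decide)).2
      have h3 : (if q (f 0) = q (f 1) then r1 (ρ (f 0)) (ρ (f 1)) else rb (q (f 0)) (q (f 1))) :=
        (hf 0 1 (by decide)).1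
      rw [if_neg hq01] at h2 h3
      have hcolk : col ≤ k := h2 ▸ (hbcol _ _ h3).2
      have hallne : ∀ i j : Fin 6, i < j → q (f i) ≠ q (f j) := by
        intro i j hij he
        have h4 : (if q (f i) = q (f j) then k + 1 else cb (q (f i)) (q (f j))) = col :=
          (hf i j hij).2
        rw [if_pos he] at h4
        omega
      refine hbno ⟨fun i => q (f i), col, fun i j hij => ?_⟩
      have h4 : (if q (f i) = q (f j) then r1 (ρ (f i)) (ρ (f j)) else rb (q (f i)) (q (f j))) :=
        (hf i j hij).1
      have h5 : (if q (f i) = q (f j) then k + 1 else cb (q (f i)) (q (f j))) = col :=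
        (hf i j hij).2
      rw [if_neg (hallne i j hij)] at h4 h5
      exact ⟨h4, h5⟩

theorem main_good : ∀ k : ℕ, GoodC (829 * 27 ^ k) (k + 2) := by
  intro k
  induction k with
  | zero =>
    have h : 829 * 27 ^ 0 = 829 := by norm_num
    rw [h]
    exact base
  | succ kk ih =>
    have h : 829 * 27 ^ (kk + 1) = 829 * 27 ^ kk * 27 := by ring
    rw [h]
    exact comp (by norm_num) ih r27 r27_irrefl r27_total r27_no6

end Stmt11Aux

/-- For every integer `t ≥ 2`, `R_t(6) ≥ 829 * 27 ^ (t - 2) + 1`: there exists a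
`t`-edge-colored tournament on `829 * 27 ^ (t - 2)` vertices containing no monochromatic
transitive subtournament of order 6. -/
theorem stmt_11 :
    ∀ t : ℕ, 2 ≤ t →
      ∃ (r : Fin (829 * 27 ^ (t - 2)) → Fin (829 * 27 ^ (t - 2)) → Prop)
        (c : Fin (829 * 27 ^ (t - 2)) → Fin (829 * 27 ^ (t - 2)) → ℕ),
        (∀ v, ¬ r v v) ∧
        (∀ u v : Fin (829 * 27 ^ (t - 2)), u ≠ v → (r u v ↔ ¬ r v u)) ∧
        (∀ u v, r u v → 1 ≤ c u v ∧ c u v ≤ t) ∧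
        ¬ ∃ (s : Finset (Fin (829 * 27 ^ (t - 2)))) (col : ℕ),
            s.card = 6 ∧
            (∀ a ∈ s, ∀ b ∈ s, r a b → c a b = col) ∧
            (∀ a ∈ s, ∀ b ∈ s, ∀ d ∈ s, r a b → r b d → r a d) := by
  intro t ht
  obtain ⟨r, c, hirr, htot, hcol, hno⟩ := Stmt11Aux.main_good (t - 2)
  refine ⟨r, c, hirr, htot, fun u v h => ?_, ?_⟩
  · have := hcol u v h
    omega
  · rintro ⟨s, col, hcard, hmono, htr⟩
    obtain ⟨f, hfmem, hfchain⟩ := Stmt11Aux.chain_of_six r hirr htot s hcard htr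
    exact hno ⟨f, col, fun i j hij =>
      ⟨hfchain i j hij, hmono _ (hfmem i) _ (hfmem j) (hfchain i j hij)⟩⟩
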